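/- Let A_ξ be a random symmetric matrix with E[‖A_ξ‖₂²] < ∞ and define g₂(x) = E[(1/4)(xᵀA_ξx)²]. Then for any L ≥ 3E[‖A_ξ‖₂²], g₂ is L-smooth relative to h₂(x) = (1/4)‖x‖₂⁴, i.e., L·h₂ ± g₂ are convex. -/

import Mathlib

open RealInnerProductSpace

private lemma convexOn_univ_of_deriv2 {f f' f'' : ℝ → ℝ}
    (h1 : ∀ t, HasDerivAt f (f' t) t) (h2 : ∀ t, HasDerivAt f' (f'' t) t)
    (h0 : ∀ t, 0 ≤ f'' t) : ConvexOn ℝ Set.univ f := by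
  have hdf : deriv f = f' := funext fun t => (h1 t).deriv
  apply convexOn_of_deriv2_nonneg convex_univ
    (fun t _ => (h1 t).continuousAt.continuousWithinAt)
  · intro t _
    exact (h1 t).differentiableAt.differentiableWithinAt
  · intro t _
    rw [hdf]
    exact (h2 t).differentiableAt.differentiableWithinAt
  · intro t _
    have hd2 : deriv (deriv f) t = f'' t := by rw [hdf]; exact (h2 t).deriv
    simp only [Function.iterate_succ, Function.iterate_zero, Function.comp_apply, id_eq]
    rw [hd2]
    exact h0 t

private lemma convexOn_of_forall_line {E : Type*} [NormedAddCommGroup E] [NormedSpace ℝ E]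
    {f : E → ℝ}
    (h : ∀ x v : E, ConvexOn ℝ Set.univ (fun t : ℝ => f (x + t • v))) :
    ConvexOn ℝ Set.univ f := by
  refine ⟨convex_univ, fun x _ y _ a b ha hb hab => ?_⟩
  have h2 := (h x (y - x)).2 (Set.mem_univ (0:ℝ)) (Set.mem_univ (1:ℝ)) ha hb hab
  simp only [smul_eq_mul, mul_zero, mul_one, zero_add, zero_smul, add_zero, one_smul] at h2
  have e1 : x + b • (y - x) = a • x + b • y := by
    have hab' : a = 1 - b := by linarith
    rw [hab', smul_sub]; module
  have e2 : x + (y - x) = y := by abel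
  rw [e1, e2] at h2
  exact h2

private lemma hasDerivAt_quadratic (c0 c1 c2 t : ℝ) :
    HasDerivAt (fun t : ℝ => c0 + 2*c1*t + c2*t^2) (2*(c1 + c2*t)) t := by
  have h := (((hasDerivAt_id t).const_mul (2*c1)).const_add c0).add
    ((hasDerivAt_pow 2 t).const_mul c2)
  have e : 2*c1*1 + c2*(↑(2:ℕ)*t^(2-1)) = 2*(c1 + c2*t) := by push_cast; ring
  exact e ▸ h

private lemma quartic_combo_convex {ι : Type*} [Fintype ι] (w : ι → ℝ)
    (L ε s p r : ℝ) (α β γ : ι → ℝ)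
    (hnn : ∀ t : ℝ, 0 ≤ L * (2*(p + r*t)^2 + (s + 2*p*t + r*t^2)*r)
      + ε * ∑ i, w i * (2*(β i + γ i*t)^2 + (α i + 2*β i*t + γ i*t^2)*(γ i))) :
    ConvexOn ℝ Set.univ (fun t : ℝ => L * (1/4 * (s + 2*p*t + r*t^2)^2)
      + ε * ∑ i, w i * (1/4 * (α i + 2*β i*t + γ i*t^2)^2)) := by
  refine convexOn_univ_of_deriv2
    (f' := fun t => L * ((s + 2*p*t + r*t^2) * (p + r*t))
      + ε * ∑ i, w i * ((α i + 2*β i*t + γ i*t^2) * (β i + γ i*t)))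
    (f'' := fun t => L * (2*(p + r*t)^2 + (s + 2*p*t + r*t^2)*r)
      + ε * ∑ i, w i * (2*(β i + γ i*t)^2 + (α i + 2*β i*t + γ i*t^2)*(γ i)))
    ?_ ?_ hnn
  · intro t
    have hP := ((hasDerivAt_quadratic s p r t).pow 2).const_mul (1/4 : ℝ)
    have hP' := hP.const_mul L
    have hS : ∀ i ∈ Finset.univ (α := ι), HasDerivAt
        (fun t : ℝ => w i * (1/4 * (α i + 2*β i*t + γ i*t^2)^2))
        (w i * ((α i + 2*β i*t + γ i*t^2) * (β i + γ i*t))) t := by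
      intro i _
      have h := (((hasDerivAt_quadratic (α i) (β i) (γ i) t).pow 2).const_mul
        (1/4 : ℝ)).const_mul (w i)
      have e : w i * (1/4 * (↑(2:ℕ) * (α i + 2*β i*t + γ i*t^2)^(2-1) * (2*(β i + γ i*t))))
          = w i * ((α i + 2*β i*t + γ i*t^2) * (β i + γ i*t)) := by push_cast; ring
      exact e ▸ h
    have hsum := (HasDerivAt.fun_sum hS).const_mul ε
    have h := hP'.add hsum
    have e : L * (1/4 * (↑(2:ℕ) * (s + 2*p*t + r*t^2)^(2-1) * (2*(p + r*t))))
        + ε * ∑ i, w i * ((α i + 2*β i*t + γ i*t^2) * (β i + γ i*t))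
        = L * ((s + 2*p*t + r*t^2) * (p + r*t))
        + ε * ∑ i, w i * ((α i + 2*β i*t + γ i*t^2) * (β i + γ i*t)) := by push_cast; ring
    beta_reduce
    exact e ▸ h
  · intro t
    have hP : HasDerivAt (fun t : ℝ => L * ((s + 2*p*t + r*t^2) * (p + r*t)))
        (L * (2*(p + r*t)^2 + (s + 2*p*t + r*t^2)*r)) t := by
      have h := ((hasDerivAt_quadratic s p r t).mul
        (((hasDerivAt_id t).const_mul r).const_add p)).const_mul L
      have e : L * (2*(p + r*t) * (p + r*t) + (s + 2*p*t + r*t^2) * (r*1))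
          = L * (2*(p + r*t)^2 + (s + 2*p*t + r*t^2)*r) := by ring
      exact e ▸ h
    have hS : ∀ i ∈ Finset.univ (α := ι), HasDerivAt
        (fun t : ℝ => w i * ((α i + 2*β i*t + γ i*t^2) * (β i + γ i*t)))
        (w i * (2*(β i + γ i*t)^2 + (α i + 2*β i*t + γ i*t^2)*(γ i))) t := by
      intro i _
      have h := ((hasDerivAt_quadratic (α i) (β i) (γ i) t).mul
        (((hasDerivAt_id t).const_mul (γ i)).const_add (β i))).const_mul (w i)
      have e : w i * (2*(β i + γ i*t) * (β i + γ i*t) + (α i + 2*β i*t + γ i*t^2) * (γ i*1))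
          = w i * (2*(β i + γ i*t)^2 + (α i + 2*β i*t + γ i*t^2)*(γ i)) := by ring
      exact e ▸ h
    exact hP.add ((HasDerivAt.fun_sum hS).const_mul ε)

private lemma symm_inner {d : ℕ} {A : Matrix (Fin d) (Fin d) ℝ} (hA : A.IsSymm)
    (u v : EuclideanSpace ℝ (Fin d)) :
    ⟪v, Matrix.toEuclideanCLM (𝕜 := ℝ) A u⟫ = ⟪u, Matrix.toEuclideanCLM (𝕜 := ℝ) A v⟫ := by
  have hH : A.IsHermitian := by
    rwa [Matrix.IsHermitian, Matrix.conjTranspose_eq_transpose_of_trivial]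
  have hs := Matrix.isHermitian_iff_isSymmetric.mp hH
  have hcoe : ∀ z : EuclideanSpace ℝ (Fin d),
      Matrix.toEuclideanCLM (𝕜 := ℝ) A z = Matrix.toEuclideanLin A z := by
    intro z
    rw [← Matrix.coe_toEuclideanCLM_eq_toEuclideanLin]
    rfl
  rw [hcoe, hcoe, ← hs u v, real_inner_comm]

private lemma key_ineq {d : ℕ} {ι : Type*} [Fintype ι]
    (w : ι → ℝ) (hw : ∀ i, 0 ≤ w i)
    (T : ι → EuclideanSpace ℝ (Fin d) →L[ℝ] EuclideanSpace ℝ (Fin d)) (L ε : ℝ)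
    (hL : 3 * ∑ i, w i * ‖T i‖ ^ 2 ≤ L) (hε : |ε| ≤ 1)
    (y v : EuclideanSpace ℝ (Fin d)) :
    0 ≤ L * (2*⟪y, v⟫^2 + ‖y‖^2*‖v‖^2)
      + ε * ∑ i, w i * (2*⟪y, T i v⟫^2 + ⟪y, T i y⟫*⟪v, T i v⟫) := by
  have hsum_nn : (0:ℝ) ≤ ∑ i, w i * ‖T i‖ ^ 2 :=
    Finset.sum_nonneg fun i _ => mul_nonneg (hw i) (by positivity)
  have hLnn : 0 ≤ L := le_trans (by linarith) hL
  have hbound : ∀ i, |2*⟪y, T i v⟫^2 + ⟪y, T i y⟫*⟪v, T i v⟫|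
      ≤ 3*‖T i‖^2*(‖y‖^2*‖v‖^2) := by
    intro i
    have h1 : |⟪y, T i v⟫| ≤ ‖T i‖*‖y‖*‖v‖ := by
      calc |⟪y, T i v⟫| ≤ ‖y‖ * ‖T i v‖ := abs_real_inner_le_norm _ _
        _ ≤ ‖y‖ * (‖T i‖ * ‖v‖) :=
          mul_le_mul_of_nonneg_left ((T i).le_opNorm v) (norm_nonneg y)
        _ = ‖T i‖*‖y‖*‖v‖ := by ring
    have h2 : |⟪y, T i y⟫| ≤ ‖T i‖*‖y‖*‖y‖ := by
      calc |⟪y, T i y⟫| ≤ ‖y‖ * ‖T i y‖ := abs_real_inner_le_norm _ _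
        _ ≤ ‖y‖ * (‖T i‖ * ‖y‖) :=
          mul_le_mul_of_nonneg_left ((T i).le_opNorm y) (norm_nonneg y)
        _ = ‖T i‖*‖y‖*‖y‖ := by ring
    have h3 : |⟪v, T i v⟫| ≤ ‖T i‖*‖v‖*‖v‖ := by
      calc |⟪v, T i v⟫| ≤ ‖v‖ * ‖T i v‖ := abs_real_inner_le_norm _ _
        _ ≤ ‖v‖ * (‖T i‖ * ‖v‖) :=
          mul_le_mul_of_nonneg_left ((T i).le_opNorm v) (norm_nonneg v)
        _ = ‖T i‖*‖v‖*‖v‖ := by ring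
    have ha2 : ⟪y, T i v⟫^2 ≤ (‖T i‖*‖y‖*‖v‖)^2 := by
      rw [← sq_abs]
      exact pow_le_pow_left₀ (abs_nonneg _) h1 2
    have hbc : |⟪y, T i y⟫| * |⟪v, T i v⟫| ≤ (‖T i‖*‖y‖*‖y‖)*(‖T i‖*‖v‖*‖v‖) :=
      mul_le_mul h2 h3 (abs_nonneg _) (by positivity)
    have htri : |2*⟪y, T i v⟫^2 + ⟪y, T i y⟫*⟪v, T i v⟫|
        ≤ 2*⟪y, T i v⟫^2 + |⟪y, T i y⟫| * |⟪v, T i v⟫| := by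
      calc |2*⟪y, T i v⟫^2 + ⟪y, T i y⟫*⟪v, T i v⟫|
          ≤ |2*⟪y, T i v⟫^2| + |⟪y, T i y⟫*⟪v, T i v⟫| := abs_add_le _ _
        _ = 2*⟪y, T i v⟫^2 + |⟪y, T i y⟫| * |⟪v, T i v⟫| := by
            rw [abs_mul, abs_mul, abs_pow, sq_abs, abs_two]
    nlinarith [htri, ha2, hbc]
  set S := ∑ i, w i * (2*⟪y, T i v⟫^2 + ⟪y, T i y⟫*⟪v, T i v⟫) with hS
  have hSabs : |S| ≤ (3 * ∑ i, w i * ‖T i‖ ^ 2) * (‖y‖^2*‖v‖^2) := by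
    calc |S| ≤ ∑ i, |w i * (2*⟪y, T i v⟫^2 + ⟪y, T i y⟫*⟪v, T i v⟫)| :=
        Finset.abs_sum_le_sum_abs _ _
      _ ≤ ∑ i, w i * (3*‖T i‖^2*(‖y‖^2*‖v‖^2)) := by
          refine Finset.sum_le_sum fun i _ => ?_
          rw [abs_mul, abs_of_nonneg (hw i)]
          exact mul_le_mul_of_nonneg_left (hbound i) (hw i)
      _ = ∑ i, (w i * ‖T i‖ ^ 2) * (3 * (‖y‖^2*‖v‖^2)) :=
          Finset.sum_congr rfl fun i _ => by ring
      _ = (∑ i, w i * ‖T i‖ ^ 2) * (3 * (‖y‖^2*‖v‖^2)) := (Finset.sum_mul _ _ _).symm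
      _ = (3 * ∑ i, w i * ‖T i‖ ^ 2) * (‖y‖^2*‖v‖^2) := by ring
  have hεS : |ε * S| ≤ |S| := by
    rw [abs_mul]
    nlinarith [abs_nonneg S]
  have hLY : (3 * ∑ i, w i * ‖T i‖ ^ 2) * (‖y‖^2*‖v‖^2) ≤ L * (‖y‖^2*‖v‖^2) :=
    mul_le_mul_of_nonneg_right hL (by positivity)
  have hB : L * (‖y‖^2*‖v‖^2) ≤ L * (2*⟪y, v⟫^2 + ‖y‖^2*‖v‖^2) :=
    mul_le_mul_of_nonneg_left (by nlinarith [sq_nonneg ⟪y, v⟫]) hLnn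
  have := neg_abs_le (ε * S)
  linarith [abs_le.mp hεS]

private lemma main_aux {d : ℕ} {ι : Type*} [Fintype ι]
    (w : ι → ℝ) (hw : ∀ i, 0 ≤ w i)
    (A : ι → Matrix (Fin d) (Fin d) ℝ) (hA : ∀ i, (A i).IsSymm) (L ε : ℝ)
    (hL : 3 * ∑ i, w i * ‖Matrix.toEuclideanCLM (𝕜 := ℝ) (A i)‖ ^ 2 ≤ L)
    (hε : |ε| ≤ 1) :
    ConvexOn ℝ Set.univ (fun x : EuclideanSpace ℝ (Fin d) =>
        L * (1 / 4 * ‖x‖ ^ 4)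
          + ε * ∑ i, w i * (1 / 4 * ⟪x, Matrix.toEuclideanCLM (𝕜 := ℝ) (A i) x⟫ ^ 2)) := by
  set T : ι → EuclideanSpace ℝ (Fin d) →L[ℝ] EuclideanSpace ℝ (Fin d) :=
    fun i => Matrix.toEuclideanCLM (𝕜 := ℝ) (A i) with hT
  apply convexOn_of_forall_line
  intro x v
  have claim1 : ∀ t : ℝ, ‖x + t • v‖^2 = ‖x‖^2 + 2*⟪x, v⟫*t + ‖v‖^2*t^2 := by
    intro t
    rw [norm_add_sq_real, real_inner_smul_right, norm_smul, Real.norm_eq_abs, mul_pow, sq_abs]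
    ring
  have claim2 : ∀ (t : ℝ) (i : ι), ⟪x + t • v, T i (x + t • v)⟫
      = ⟪x, T i x⟫ + 2*⟪x, T i v⟫*t + ⟪v, T i v⟫*t^2 := by
    intro t i
    have hsym : ⟪v, T i x⟫ = ⟪x, T i v⟫ := symm_inner (hA i) x v
    simp only [map_add, map_smul, inner_add_left, inner_add_right,
      real_inner_smul_left, real_inner_smul_right, smul_eq_mul]
    linear_combination t * hsym
  have claim3 : ∀ t : ℝ, ⟪x + t • v, v⟫ = ⟪x, v⟫ + ‖v‖^2*t := by
    intro t
    rw [inner_add_left, real_inner_smul_left, real_inner_self_eq_norm_sq]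
    ring
  have claim4 : ∀ (t : ℝ) (i : ι), ⟪x + t • v, T i v⟫ = ⟪x, T i v⟫ + ⟪v, T i v⟫*t := by
    intro t i
    rw [inner_add_left, real_inner_smul_left]
    ring
  show ConvexOn ℝ Set.univ (fun t : ℝ => L * (1 / 4 * ‖x + t • v‖ ^ 4)
    + ε * ∑ i, w i * (1 / 4 * ⟪x + t • v, T i (x + t • v)⟫ ^ 2))
  have heq : (fun t : ℝ => L * (1 / 4 * ‖x + t • v‖ ^ 4)
      + ε * ∑ i, w i * (1 / 4 * ⟪x + t • v, T i (x + t • v)⟫ ^ 2))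
      = (fun t : ℝ => L * (1/4 * (‖x‖^2 + 2*⟪x, v⟫*t + ‖v‖^2*t^2)^2)
      + ε * ∑ i, w i * (1/4 * (⟪x, T i x⟫ + 2*⟪x, T i v⟫*t + ⟪v, T i v⟫*t^2)^2)) := by
    funext t
    rw [show ‖x + t • v‖^4 = (‖x + t • v‖^2)^2 from by ring, claim1 t]
    congr 2
    exact Finset.sum_congr rfl fun i _ => by rw [claim2 t i]
  rw [heq]
  apply quartic_combo_convex w L ε (‖x‖^2) ⟪x, v⟫ (‖v‖^2)
    (fun i => ⟪x, T i x⟫) (fun i => ⟪x, T i v⟫) (fun i => ⟪v, T i v⟫)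
  intro t
  have hk := key_ineq w hw T L ε hL hε (x + t • v) v
  rw [claim3 t, claim1 t] at hk
  simp only [claim2 t, claim4 t] at hk
  beta_reduce
  exact hk

/-- Relative smoothness of the averaged quartic.
For a random symmetric matrix `A_ξ` with finitely many outcomes (probabilities `w i`),
`g₂(x) = E[(1/4)(xᵀA_ξx)²]` is `L`-smooth relative to `h₂(x) = (1/4)‖x‖₂⁴`
whenever `L ≥ 3E[‖A_ξ‖₂²]`: both `L·h₂ + g₂` and `L·h₂ − g₂` are convex. -/
theorem averaged_quartic_relative_smoothness {d : ℕ} {ι : Type*} [Fintype ι]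
    (w : ι → ℝ) (hw : ∀ i, 0 ≤ w i) (hw1 : ∑ i, w i = 1)
    (A : ι → Matrix (Fin d) (Fin d) ℝ) (hA : ∀ i, (A i).IsSymm) (L : ℝ)
    (hL : 3 * ∑ i, w i * ‖Matrix.toEuclideanCLM (𝕜 := ℝ) (A i)‖ ^ 2 ≤ L) :
    ConvexOn ℝ Set.univ (fun x : EuclideanSpace ℝ (Fin d) =>
        L * (1 / 4 * ‖x‖ ^ 4)
          + ∑ i, w i * (1 / 4 * ⟪x, Matrix.toEuclideanCLM (𝕜 := ℝ) (A i) x⟫ ^ 2)) ∧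
      ConvexOn ℝ Set.univ (fun x : EuclideanSpace ℝ (Fin d) =>
        L * (1 / 4 * ‖x‖ ^ 4)
          - ∑ i, w i * (1 / 4 * ⟪x, Matrix.toEuclideanCLM (𝕜 := ℝ) (A i) x⟫ ^ 2)) := by
  constructor
  · have h := main_aux w hw A hA L 1 hL (by norm_num)
    simpa only [one_mul] using h
  · have h := main_aux w hw A hA L (-1) hL (by norm_num)
    simpa only [neg_one_mul, ← sub_eq_add_neg] using h
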